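/- arXiv:2210.09703 — 2 statements merged into one kernel-verified Lean document; each statement's English description precedes it below -/
import Mathlib

section
/- Let G = (V, E) be a finite directed graph and D_G the automaton constructed from G. Then the regular reachability objective Reach(L(D_G)) is M_triv-progress-consistent: for all finite words w₁, w₂ over the alphabet of D_G, if w₁ ≺ w₁w₂ for the prefix preorder of Reach(L(D_G)), then w₁(w₂)^ω ∈ Reach(L(D_G)). -/
set_option autoImplicit false

namespace RegularMemory

/-- Concatenation of a finite word with an infinite word. -/
def wcat {C : Type} (w : List C) (x : ℕ → C) : ℕ → C := fun n =>
  if h : n < w.length then w.get ⟨n, h⟩ else x (n - w.length)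

/-- The infinite word `w^ω` (junk value if `w` is empty). -/
noncomputable def wpow {C : Type} [Nonempty C] : List C → ℕ → C
  | [] => fun _ => Classical.arbitrary C
  | (a :: l) => fun n => (a :: l).get ⟨n % (a :: l).length, Nat.mod_lt n (Nat.succ_pos _)⟩

/-- Winning continuations `w⁻¹W` of the finite word `w` for the objective `W`. -/
def contAfter {C : Type} (W : Set (ℕ → C)) (w : List C) : Set (ℕ → C) :=
  {x | wcat w x ∈ W}

/-- Prefix preorder `w₁ ⪯_W w₂`. -/
def prefLe {C : Type} (W : Set (ℕ → C)) (w₁ w₂ : List C) : Prop :=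
  contAfter W w₁ ⊆ contAfter W w₂

/-- Strict prefix relation `w₁ ≺_W w₂`. -/
def prefLt {C : Type} (W : Set (ℕ → C)) (w₁ w₂ : List C) : Prop :=
  prefLe W w₁ w₂ ∧ ¬ prefLe W w₂ w₁

/-- Comparability for the prefix preorder. -/
def PrefComparable {C : Type} (W : Set (ℕ → C)) (w₁ w₂ : List C) : Prop :=
  prefLe W w₁ w₂ ∨ prefLe W w₂ w₁

/-- The general reachability objective derived from `A`: infinite words with a prefix in `A`. -/
def ReachObj {C : Type} (A : Set (List C)) : Set (ℕ → C) :=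
  {x | ∃ n : ℕ, (List.ofFn fun i : Fin n => x i) ∈ A}

/-- The general safety objective derived from `A`. -/
def SafeObj {C : Type} (A : Set (List C)) : Set (ℕ → C) :=
  (ReachObj A)ᶜ

/-- The prefix preorder of `W` has finitely many equivalence classes. -/
def FinClasses {C : Type} (W : Set (ℕ → C)) : Prop :=
  (Set.range fun w : List C => contAfter W w).Finite

/-- The prefix preorder of `W` is well-founded:
every nonempty chain contains a minimal element. -/
def PrefWellFounded {C : Type} (W : Set (ℕ → C)) : Prop :=
  ∀ S : Set (List C), S.Nonempty →
    (∀ w₁ ∈ S, ∀ w₂ ∈ S, PrefComparable W w₁ w₂) →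
    ∃ w₀ ∈ S, ∀ w ∈ S, ¬ prefLt W w w₀

/-- Chromatic memory structure. -/
structure MemStruct (C : Type) where
  M : Type
  init : M
  upd : M → C → M

/-- Extension of the update function to finite words. -/
def MemStruct.updStar {C : Type} (N : MemStruct C) (m : N.M) (w : List C) : N.M :=
  w.foldl N.upd m

/-- The trivial one-state memory structure. -/
def trivMem (C : Type) : MemStruct C :=
  ⟨Unit, (), fun _ _ => ()⟩

/-- `W` is `N`-strongly-monotone. -/
def StronglyMonotone {C : Type} (N : MemStruct C) (W : Set (ℕ → C)) : Prop :=
  ∀ w₁ w₂ : List C,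
    N.updStar N.init w₁ = N.updStar N.init w₂ → PrefComparable W w₁ w₂

/-- `W` is `N`-progress-consistent. -/
def ProgressConsistent {C : Type} [Nonempty C] (N : MemStruct C) (W : Set (ℕ → C)) : Prop :=
  ∀ (m : N.M) (w₁ w₂ : List C),
    N.updStar N.init w₁ = m → N.updStar m w₂ = m →
    prefLt W w₁ (w₁ ++ w₂) → wcat w₁ (wpow w₂) ∈ W

/-- Two-player arena with colored edges; Player-1 vertices have outgoing edges
(so that strategies of Player 1 exist). -/
structure Arena (C : Type) where
  V : Type
  P1 : V → Prop
  E : Set (V × C × V)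
  succ : ∀ v : V, P1 v → ∃ e ∈ E, e.1 = v

namespace Arena

/-- Valid histories starting at a given vertex. -/
def HistFrom {C : Type} (A : Arena C) : A.V → List (A.V × C × A.V) → Prop
  | _, [] => True
  | v, e :: l => e ∈ A.E ∧ e.1 = v ∧ HistFrom A e.2.2 l

/-- Endpoint of a history. -/
def endFrom {C : Type} (A : Arena C) : A.V → List (A.V × C × A.V) → A.V
  | v, [] => v
  | _, e :: l => endFrom A e.2.2 l

/-- Infinite plays from a vertex. -/
def PlayFrom {C : Type} (A : Arena C) (v : A.V) (π : ℕ → A.V × C × A.V) : Prop :=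
  (π 0).1 = v ∧ ∀ n : ℕ, π n ∈ A.E ∧ (π n).2.2 = (π (n + 1)).1

/-- Colors along a play. -/
def playCol {C V : Type} (π : ℕ → V × C × V) : ℕ → C :=
  fun n => (π n).2.1

/-- Strategies of Player 1: on every valid history ending in a Player-1 vertex,
the strategy picks an edge leaving that vertex. -/
structure Strategy {C : Type} (A : Arena C) where
  next : A.V → List (A.V × C × A.V) → A.V × C × A.V
  legal : ∀ (v : A.V) (l : List (A.V × C × A.V)),
    A.HistFrom v l → A.P1 (A.endFrom v l) →
      next v l ∈ A.E ∧ (next v l).1 = A.endFrom v l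

/-- A play from `v` is consistent with the strategy `σ`. -/
def Strategy.Consistent {C : Type} {A : Arena C} (σ : A.Strategy) (v : A.V)
    (π : ℕ → A.V × C × A.V) : Prop :=
  ∀ n : ℕ, A.P1 (A.endFrom v (List.ofFn fun i : Fin n => π i)) →
    π n = σ.next v (List.ofFn fun i : Fin n => π i)

/-- `σ` is winning from `v` for the objective `W`. -/
def Strategy.WinningFrom {C : Type} {A : Arena C} (σ : A.Strategy)
    (W : Set (ℕ → C)) (v : A.V) : Prop :=
  ∀ π : ℕ → A.V × C × A.V, A.PlayFrom v π → σ.Consistent v π → playCol π ∈ W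

/-- `σ` is optimal in `(A, W)`: winning from every vertex from which
Player 1 has some winning strategy. -/
def Strategy.Optimal {C : Type} {A : Arena C} (σ : A.Strategy) (W : Set (ℕ → C)) : Prop :=
  ∀ v : A.V, (∃ σ' : A.Strategy, σ'.WinningFrom W v) → σ.WinningFrom W v

/-- `σ` is based on the memory structure `N`. -/
def Strategy.BasedOn {C : Type} {A : Arena C} (σ : A.Strategy) (N : MemStruct C) : Prop :=
  ∃ nxt : A.V → N.M → A.V × C × A.V,
    ∀ (v : A.V) (l : List (A.V × C × A.V)),
      A.HistFrom v l → A.P1 (A.endFrom v l) →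
        σ.next v l = nxt (A.endFrom v l) (N.updStar N.init (l.map fun e => e.2.1))

/-- Finite arena: finitely many vertices and edges. -/
def IsFinite {C : Type} (A : Arena C) : Prop := Finite A.V ∧ A.E.Finite

/-- Finitely branching arena. -/
def FinBranching {C : Type} (A : Arena C) : Prop :=
  ∀ v : A.V, {e ∈ A.E | e.1 = v}.Finite

/-- One-player arena of Player 1. -/
def OneP1 {C : Type} (A : Arena C) : Prop := ∀ v : A.V, A.P1 v

end Arena

/-- `N` suffices to play optimally for `W` in all arenas of the class `P`. -/
def SufficesIn {C : Type} (N : MemStruct C) (W : Set (ℕ → C))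
    (P : Arena C → Prop) : Prop :=
  ∀ A : Arena C, P A → ∃ σ : A.Strategy, σ.BasedOn N ∧ σ.Optimal W

/-- Deterministic automaton (with complete transition function). -/
structure DetAuto (C : Type) where
  Q : Type
  init : Q
  δ : Q → C → Q
  F : Set Q

/-- Extension of the transition function to finite words. -/
def DetAuto.δStar {C : Type} (D : DetAuto C) (q : D.Q) (w : List C) : D.Q :=
  w.foldl D.δ q

/-- Language recognized by `D`. -/
def DetAuto.lang {C : Type} (D : DetAuto C) : Set (List C) :=
  {w | D.δStar D.init w ∈ D.F}

/-- Prefix preorder extended to automaton states. -/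
def statePrefLe {C : Type} (D : DetAuto C) (W : Set (ℕ → C)) (q₁ q₂ : D.Q) : Prop :=
  ∀ w₁ w₂ : List C,
    D.δStar D.init w₁ = q₁ → D.δStar D.init w₂ = q₂ → prefLe W w₁ w₂

def statePrefLt {C : Type} (D : DetAuto C) (W : Set (ℕ → C)) (q₁ q₂ : D.Q) : Prop :=
  statePrefLe D W q₁ q₂ ∧ ¬ statePrefLe D W q₂ q₁

def StateComparable {C : Type} (D : DetAuto C) (W : Set (ℕ → C)) (q₁ q₂ : D.Q) : Prop :=
  statePrefLe D W q₁ q₂ ∨ statePrefLe D W q₂ q₁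

/-- Monotone decomposition of `D` with `k` sets. -/
def MonotoneDecomposition {C : Type} (D : DetAuto C) (W : Set (ℕ → C))
    {k : ℕ} (Γ : Fin k → Set D.Q) : Prop :=
  (∀ q : D.Q, ∃ i : Fin k, q ∈ Γ i) ∧
  (∀ (c : C) (i : Fin k), ∃ j : Fin k, (fun q => D.δ q c) '' Γ i ⊆ Γ j) ∧
  (∀ i : Fin k, ∀ q₁ ∈ Γ i, ∀ q₂ ∈ Γ i, StateComparable D W q₁ q₂)

end RegularMemory

namespace RegularMemory

/-- Vertex and edge states coming from the cycle graph `C_n` (`vc`, `ec`)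
and from the graph `G` (`vg`, `eg`). -/
inductive ZKind (n : ℕ) (Ed : Finset (Fin n × Fin n)) : Type
  | vc (i : Fin n)
  | ec (i : Fin n)
  | vg (v : Fin n)
  | eg (e : Fin n × Fin n) (he : e ∈ Ed)

/-- States of the automaton `D_G`. -/
inductive DGState (n : ℕ) (Ed : Finset (Fin n × Fin n)) : Type
  | base (z : ZKind n Ed)
  | qinit
  | bot
  | top

/-- Alphabet of the automaton `D_G`: letters `in`, `out`, and one letter `a_z`
for each vertex/edge state `z`. -/
inductive DGAlpha (n : ℕ) (Ed : Finset (Fin n × Fin n)) : Type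
  | inL
  | outL
  | az (z : ZKind n Ed)

instance (n : ℕ) (Ed : Finset (Fin n × Fin n)) : Nonempty (DGAlpha n Ed) :=
  ⟨DGAlpha.inL⟩

/-- Cyclic successor in `Fin n`. -/
def finSucc {n : ℕ} (i : Fin n) : Fin n :=
  ⟨(i.val + 1) % n, Nat.mod_lt _ i.pos⟩

/-- Target of the transition reading letter `a_{z'}` from the state `z`. -/
def azTarget {n : ℕ} {Ed : Finset (Fin n × Fin n)} (z z' : ZKind n Ed) : DGState n Ed :=
  match z, z' with
  | .vc i, .vc j => if i = j then .top else .bot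
  | .ec i, .ec j => if i = j then .top else .bot
  | .vg v, .vg w => if v = w then .top else .bot
  | .vg _, .vc _ => .top
  | .eg e _, .eg e' _ => if e = e' then .top else .bot
  | .eg _ _, .ec _ => .top
  | _, _ => .bot

/-- Transition function of the automaton `D_G`. -/
def DGdelta {n : ℕ} {Ed : Finset (Fin n × Fin n)} :
    DGState n Ed → DGAlpha n Ed → DGState n Ed
  | .base (.vc i), .inL => .base (.vc i)
  | .base (.vc i), .outL => .base (.vc i)
  | .base (.ec i), .inL => .base (.vc i)
  | .base (.ec i), .outL => .base (.vc (finSucc i))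
  | .base (.vg v), .inL => .base (.vg v)
  | .base (.vg v), .outL => .base (.vg v)
  | .base (.eg e _), .inL => .base (.vg e.1)
  | .base (.eg e _), .outL => .base (.vg e.2)
  | .base z, .az z' => azTarget z z'
  | .qinit, .inL => .qinit
  | .qinit, .outL => .qinit
  | .qinit, .az z => .base z
  | .bot, _ => .bot
  | .top, _ => .top

/-- The automaton `D_G` built from the graph `G = (Fin n, Ed)`. -/
def DG (n : ℕ) (Ed : Finset (Fin n × Fin n)) : DetAuto (DGAlpha n Ed) where
  Q := DGState n Ed
  init := DGState.qinit
  δ := DGdelta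
  F := {DGState.top}

/-- `G = (Fin n, Ed)` has a Hamiltonian cycle. -/
def HasHamiltonianCycle (n : ℕ) (Ed : Finset (Fin n × Fin n)) : Prop :=
  ∃ u : Fin n → Fin n, Function.Bijective u ∧ ∀ i : Fin n, (u i, u (finSucc i)) ∈ Ed

end RegularMemory

namespace RegularMemory

/- ========= Auxiliary material for Statement 16 ========= -/

section Aux

variable {n : ℕ} {Ed : Finset (Fin n × Fin n)}

lemma ofFn_wcat {C : Type} (w : List C) (x : ℕ → C) (m : ℕ) :
    (List.ofFn fun i : Fin (w.length + m) => wcat w x i) =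
      w ++ List.ofFn fun i : Fin m => x i := by
  apply List.ext_getElem
  · simp
  · intro i h1 h2
    simp only [List.getElem_ofFn]
    by_cases h : i < w.length
    · rw [List.getElem_append_left h]
      simp [wcat, h]
    · rw [List.getElem_append_right (Nat.le_of_not_lt h)]
      simp only [List.getElem_ofFn]
      simp [wcat, h]

lemma ofFn_wcat_le {C : Type} (w : List C) (x : ℕ → C) (m : ℕ) (h : m ≤ w.length) :
    (List.ofFn fun i : Fin m => wcat w x i) = w.take m := by
  apply List.ext_getElem
  · simp [Nat.min_eq_left h]
  · intro i h1 h2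
    have hi : i < w.length := lt_of_lt_of_le (by simpa using h1) h
    simp [wcat, hi]

lemma ofFn_wpow {C : Type} [Nonempty C] (w : List C) (hw : w ≠ []) :
    (List.ofFn fun i : Fin w.length => wpow w i) = w := by
  cases w with
  | nil => exact absurd rfl hw
  | cons a l =>
    apply List.ext_getElem
    · simp
    · intro i h1 h2
      have hlen : i % (l.length + 1) = i := Nat.mod_eq_of_lt (by simpa using h2)
      rw [List.getElem_ofFn]
      have hwp : wpow (a :: l) i = (a :: l).get ⟨i % (a :: l).length,
          Nat.mod_lt i (Nat.succ_pos _)⟩ := rfl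
      rw [hwp]
      simp [hlen]

lemma DGdelta_top (c : DGAlpha n Ed) : DGdelta DGState.top c = DGState.top := by
  cases c <;> rfl

lemma DGdelta_bot (c : DGAlpha n Ed) : DGdelta DGState.bot c = DGState.bot := by
  cases c <;> rfl

lemma foldl_top (w : List (DGAlpha n Ed)) :
    w.foldl DGdelta DGState.top = DGState.top := by
  induction w with
  | nil => rfl
  | cons c w ih => simp [List.foldl_cons, DGdelta_top, ih]

lemma foldl_bot (w : List (DGAlpha n Ed)) :
    w.foldl DGdelta DGState.bot = DGState.bot := by
  induction w with
  | nil => rfl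
  | cons c w ih => simp [List.foldl_cons, DGdelta_bot, ih]

lemma azTarget_top_or_bot (z z' : ZKind n Ed) :
    azTarget z z' = DGState.top ∨ azTarget z z' = DGState.bot := by
  cases z <;> cases z' <;> simp only [azTarget] <;> (try split) <;> simp

lemma azTarget_diag (z : ZKind n Ed) : azTarget z z = DGState.top := by
  cases z <;> simp [azTarget]

lemma DGdelta_base_az (z z' : ZKind n Ed) :
    DGdelta (DGState.base z) (DGAlpha.az z') = azTarget z z' := by
  cases z <;> rfl

lemma DGdelta_step_qinit (q : DGState n Ed) (c : DGAlpha n Ed)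
    (h : DGdelta q c = DGState.qinit) : q = DGState.qinit := by
  cases q with
  | base z =>
    cases c with
    | az z' =>
      rcases azTarget_top_or_bot z z' with h' | h' <;>
        · exfalso; rw [DGdelta_base_az, h'] at h
          cases h
    | inL => cases z <;> cases h
    | outL => cases z <;> cases h
  | qinit => rfl
  | bot => rw [DGdelta_bot] at h; cases h
  | top => rw [DGdelta_top] at h; cases h

lemma foldl_qinit (w : List (DGAlpha n Ed)) (q : DGState n Ed)
    (h : w.foldl DGdelta q = DGState.qinit) : q = DGState.qinit := by
  induction w generalizing q with
  | nil => exact h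
  | cons c w ih => exact DGdelta_step_qinit q c (ih _ h)

/-- Reachability relation by `in`/`out` among base states. -/
def Rrel : ZKind n Ed → ZKind n Ed → Prop
  | .vc i, .vc j => i = j
  | .ec _, .vc _ => True
  | .ec i, .ec j => i = j
  | .vg v, .vg w => v = w
  | .eg e _, .eg e' _ => e = e'
  | .eg _ _, .vg _ => True
  | _, _ => False

lemma Rrel_refl (z : ZKind n Ed) : Rrel z z := by
  cases z <;> simp [Rrel]

lemma Rrel_step (z y y' : ZKind n Ed) (c : DGAlpha n Ed)
    (hc : c = DGAlpha.inL ∨ c = DGAlpha.outL)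
    (hr : Rrel z y) (hs : DGdelta (DGState.base y) c = DGState.base y') :
    Rrel z y' := by
  rcases hc with rfl | rfl <;>
    cases y <;> cases z <;>
      simp only [DGdelta] at hs <;>
        (injection hs with hs; subst hs; simp only [Rrel] at hr ⊢) <;> exact hr

lemma reach_base (w : List (DGAlpha n Ed)) :
    ∀ (z y z'' : ZKind n Ed), Rrel z y →
      w.foldl DGdelta (DGState.base y) = DGState.base z'' → Rrel z z'' := by
  induction w with
  | nil =>
    intro z y z'' hr h
    injection h with h; subst h; exact hr
  | cons c w ih =>
    intro z y z'' hr h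
    rw [List.foldl_cons] at h
    cases c with
    | az z' =>
      rcases azTarget_top_or_bot y z' with h' | h'
      · rw [DGdelta_base_az, h', foldl_top] at h
        exact absurd h (by simp)
      · rw [DGdelta_base_az, h', foldl_bot] at h
        exact absurd h (by simp)
    | inL =>
      cases y with
      | vc i => exact ih z _ z'' hr h
      | ec i => exact ih z _ z'' (Rrel_step z _ _ DGAlpha.inL (Or.inl rfl) hr rfl) h
      | vg v => exact ih z _ z'' hr h
      | eg e he => exact ih z _ z'' (Rrel_step z _ _ DGAlpha.inL (Or.inl rfl) hr rfl) h
    | outL =>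
      cases y with
      | vc i => exact ih z _ z'' hr h
      | ec i => exact ih z _ z'' (Rrel_step z _ _ DGAlpha.outL (Or.inr rfl) hr rfl) h
      | vg v => exact ih z _ z'' hr h
      | eg e he => exact ih z _ z'' (Rrel_step z _ _ DGAlpha.outL (Or.inr rfl) hr rfl) h

lemma Rrel_az (z z'' : ZKind n Ed) (hr : Rrel z z'') (hne : z'' ≠ z) :
    azTarget z'' z = DGState.bot := by
  cases z <;> cases z'' <;> simp only [Rrel] at hr <;>
    first
      | rfl
      | (exfalso; apply hne; cases hr; rfl)

/-- A letter `a_{z'}` that kills the state `z` but not itself. -/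
def badOf : ZKind n Ed → ZKind n Ed
  | .vc i => .ec i
  | .ec i => .vc i
  | .vg v => .ec v
  | .eg e _ => .vc e.1

lemma azTarget_badOf (z : ZKind n Ed) : azTarget z (badOf z) = DGState.bot := by
  cases z <;> rfl

/-- The continuations from a state. -/
def SC (q : DGState n Ed) : Set (ℕ → DGAlpha n Ed) :=
  {x | ∃ m : ℕ, (List.ofFn fun i : Fin m => x i).foldl DGdelta q = DGState.top}

lemma contAfter_eq (w : List (DGAlpha n Ed)) :
    contAfter (ReachObj (DG n Ed).lang) w = SC (w.foldl DGdelta DGState.qinit) := by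
  ext x
  constructor
  · rintro ⟨m, hm⟩
    have hm' : (List.ofFn fun i : Fin m => wcat w x i).foldl DGdelta DGState.qinit
        = DGState.top := by
      exact hm
    rcases le_or_gt m w.length with h | h
    · rw [ofFn_wcat_le w x m h] at hm'
      have : w.foldl DGdelta DGState.qinit = DGState.top := by
        conv_lhs => rw [← List.take_append_drop m w]
        rw [List.foldl_append, hm', foldl_top]
      exact ⟨0, by simpa using this⟩
    · refine ⟨m - w.length, ?_⟩
      have hmeq : m = w.length + (m - w.length) := by omega
      rw [List.ofFn_congr hmeq] at hm'
      have : (List.ofFn fun i : Fin (w.length + (m - w.length)) => wcat w x i).foldl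
          DGdelta DGState.qinit = DGState.top := by
        convert hm' using 2
        rfl
      rw [ofFn_wcat, List.foldl_append] at this
      exact this
  · rintro ⟨m, hm⟩
    refine ⟨w.length + m, ?_⟩
    show ((List.ofFn fun i : Fin (w.length + m) => wcat w x i).foldl DGdelta
      DGState.qinit) ∈ ({DGState.top} : Set (DGState n Ed))
    rw [ofFn_wcat, List.foldl_append, hm]
    rfl

lemma not_in_SC_of_bot_step (q : DGState n Ed) (c : DGAlpha n Ed)
    (hq : q ≠ DGState.top) (hs : DGdelta q c = DGState.bot) :
    (fun _ : ℕ => c) ∉ SC q := by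
  rintro ⟨m, hm⟩
  cases m with
  | zero => simp at hm; exact hq hm
  | succ m =>
    rw [List.ofFn_succ, List.foldl_cons, hs, foldl_bot] at hm
    cases hm

end Aux

/-- the regular reachability objective `Reach(L(D_G))` is
`M_triv`-progress-consistent. -/
theorem DG_trivial_progressConsistent (n : ℕ) (Ed : Finset (Fin n × Fin n)) :
    ∀ w₁ w₂ : List (DGAlpha n Ed),
      prefLt (ReachObj (DG n Ed).lang) w₁ (w₁ ++ w₂) →
        wcat w₁ (wpow w₂) ∈ ReachObj (DG n Ed).lang := by
  intro w₁ w₂ hlt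
  obtain ⟨hle, hnle⟩ := hlt
  rw [prefLe, contAfter_eq, contAfter_eq, List.foldl_append] at hle hnle
  set q₁ : DGState n Ed := w₁.foldl DGdelta DGState.qinit with hq₁
  set q₂ : DGState n Ed := w₂.foldl DGdelta q₁ with hq₂
  -- basic facts
  have hq1top : q₁ ≠ DGState.top := by
    intro h
    exact hnle (fun x _ => ⟨0, by simp [h]⟩)
  have hq2bot : q₂ ≠ DGState.bot := by
    intro h
    refine hnle (fun x hx => ?_)
    exfalso
    obtain ⟨m, hm⟩ := hx
    rw [h, foldl_bot] at hm
    cases hm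
  have hne : q₂ ≠ q₁ := by
    intro h
    exact hnle (by rw [h])
  have hq2 : q₂ = DGState.top := by
    cases hc1 : q₁ with
    | top => exact absurd hc1 hq1top
    | bot =>
      exfalso; apply hq2bot
      rw [hq₂, hc1, foldl_bot]
    | qinit =>
      cases hc2 : q₂ with
      | top => rfl
      | bot => exact absurd hc2 hq2bot
      | qinit => exact absurd (hc2.trans hc1.symm) hne
      | base z'' =>
        exfalso
        set b : ZKind n Ed := badOf z'' with hb
        have hxin : (fun _ : ℕ => DGAlpha.az b) ∈ SC q₁ := by
          refine ⟨2, ?_⟩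
          rw [hc1]
          have h2 : (List.ofFn fun _ : Fin 2 => DGAlpha.az b)
              = [DGAlpha.az (n := n) (Ed := Ed) b, DGAlpha.az b] := by
            simp [List.ofFn_succ]
          rw [h2, List.foldl_cons, List.foldl_cons, List.foldl_nil,
            show DGdelta DGState.qinit (DGAlpha.az b) = DGState.base b from rfl,
            DGdelta_base_az]
          exact azTarget_diag b
        have hxout := not_in_SC_of_bot_step q₂ (DGAlpha.az b)
          (by rw [hc2]; exact fun h => nomatch h)
          (by rw [hc2, DGdelta_base_az]; exact azTarget_badOf z'')
        exact hxout (hle hxin)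
    | base z =>
      cases hc2 : q₂ with
      | top => rfl
      | bot => exact absurd hc2 hq2bot
      | qinit =>
        exfalso
        have := foldl_qinit w₂ q₁ (by rw [← hq₂, hc2])
        rw [hc1] at this
        cases this
      | base z'' =>
        exfalso
        have hR : Rrel z z'' := by
          apply reach_base w₂ z z z'' (Rrel_refl z)
          rw [← hc1, ← hq₂, hc2]
        have hzz : z'' ≠ z := by
          intro h
          exact hne (by rw [hc2, hc1, h])
        have hbot : azTarget z'' z = DGState.bot := Rrel_az z z'' hR hzz
        have hxin : (fun _ : ℕ => DGAlpha.az z) ∈ SC q₁ := by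
          refine ⟨1, ?_⟩
          rw [hc1]
          have h1 : (List.ofFn fun _ : Fin 1 => DGAlpha.az z)
              = [DGAlpha.az (n := n) (Ed := Ed) z] := by
            simp [List.ofFn_succ]
          rw [h1, List.foldl_cons, List.foldl_nil, DGdelta_base_az]
          exact azTarget_diag z
        have hxout := not_in_SC_of_bot_step q₂ (DGAlpha.az z)
          (by rw [hc2]; exact fun h => nomatch h)
          (by rw [hc2, DGdelta_base_az]; exact hbot)
        exact hxout (hle hxin)
  -- conclude
  have hw2 : w₂ ≠ [] := by
    intro h
    apply hne
    rw [hq₂, h, List.foldl_nil]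
  refine ⟨w₁.length + w₂.length, ?_⟩
  have heq : (List.ofFn fun i : Fin (w₁.length + w₂.length) => wcat w₁ (wpow w₂) i)
      = w₁ ++ w₂ := by
    rw [ofFn_wcat, ofFn_wpow w₂ hw2]
  rw [heq]
  show ((w₁ ++ w₂).foldl DGdelta DGState.qinit) ∈ ({DGState.top} : Set (DGState n Ed))
  rw [List.foldl_append, ← hq₁, ← hq₂, hq2]
  rfl

end RegularMemory
end

section
/- Let C = {a, b} and let W ⊆ C^ω be the set of infinite words containing infinitely many occurrences of a and infinitely many occurrences of b. Then W is M_triv-strongly-monotone and M_triv-progress-consistent, but M_triv does not suffice to play optimally for W: there is a finite one-player arena of Player 1 in which Player 1 has a winning strategy from some vertex but no optimal strategy based on M_triv (i.e., no memoryless optimal strategy). -/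
set_option autoImplicit false

namespace RegularMemory

/-- The objective over `C = {a, b}` (encoded as `Bool`, with `a = true` and
`b = false`): both letters are seen infinitely often. -/
def InfBoth : Set (ℕ → Bool) :=
  {x | (∀ N : ℕ, ∃ n : ℕ, N ≤ n ∧ x n = true) ∧ (∀ N : ℕ, ∃ n : ℕ, N ≤ n ∧ x n = false)}

lemma wcat_ge {C : Type} (w : List C) (x : ℕ → C) (n : ℕ) (h : w.length ≤ n) :
    wcat w x n = x (n - w.length) := dif_neg (by omega)

lemma wcat_mem_InfBoth (w : List Bool) (x : ℕ → Bool) :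
    wcat w x ∈ InfBoth ↔ x ∈ InfBoth := by
  constructor
  · rintro ⟨h1, h2⟩
    refine ⟨fun N => ?_, fun N => ?_⟩
    · obtain ⟨n, hn, hx⟩ := h1 (N + w.length)
      exact ⟨n - w.length, by omega, by rwa [wcat_ge w x n (by omega)] at hx⟩
    · obtain ⟨n, hn, hx⟩ := h2 (N + w.length)
      exact ⟨n - w.length, by omega, by rwa [wcat_ge w x n (by omega)] at hx⟩
  · rintro ⟨h1, h2⟩
    refine ⟨fun N => ?_, fun N => ?_⟩
    · obtain ⟨n, hn, hx⟩ := h1 N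
      refine ⟨n + w.length, by omega, ?_⟩
      rw [wcat_ge w x _ (by omega), Nat.add_sub_cancel]; exact hx
    · obtain ⟨n, hn, hx⟩ := h2 N
      refine ⟨n + w.length, by omega, ?_⟩
      rw [wcat_ge w x _ (by omega), Nat.add_sub_cancel]; exact hx

lemma prefLe_InfBoth (w₁ w₂ : List Bool) : prefLe InfBoth w₁ w₂ := by
  intro x hx
  have : x ∈ InfBoth := (wcat_mem_InfBoth w₁ x).mp hx
  exact (wcat_mem_InfBoth w₂ x).mpr this

/-- Single-vertex arena with self-loops of both colors. -/
def oneArena : Arena Bool where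
  V := Unit
  P1 := fun _ => True
  E := Set.univ
  succ := fun v _ => ⟨(v, true, v), Set.mem_univ _, rfl⟩

lemma oneArena_hist : ∀ (v : oneArena.V) (l : List (oneArena.V × Bool × oneArena.V)),
    oneArena.HistFrom v l := by
  intro v l
  induction l generalizing v with
  | nil => trivial
  | cons e l ih => exact ⟨Set.mem_univ _, rfl, ih _⟩

/-- The alternating strategy. -/
def altStrat : oneArena.Strategy where
  next := fun _ l => ((), decide (l.length % 2 = 0), ())
  legal := fun _ _ _ _ => ⟨Set.mem_univ _, rfl⟩

lemma altStrat_winning : altStrat.WinningFrom InfBoth () := by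
  intro π _ hc
  have hπ : ∀ n : ℕ, π n = ((), decide (n % 2 = 0), ()) := by
    intro n
    have := hc n trivial
    rw [this]
    show ((), decide ((List.ofFn fun i : Fin n => π i).length % 2 = 0), ()) = _
    simp
  constructor
  · intro N
    refine ⟨2 * N, by omega, ?_⟩
    show (π (2 * N)).2.1 = true
    rw [hπ]; simp [Nat.mul_mod_right]
  · intro N
    refine ⟨2 * N + 1, by omega, ?_⟩
    show (π (2 * N + 1)).2.1 = false
    rw [hπ]; simp [Nat.add_mul_mod_self_left, Nat.mul_mod_right]

/-- `InfBoth` is `M_triv`-strongly-monotone and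
`M_triv`-progress-consistent, yet `M_triv` does not suffice to play optimally:
there is a finite one-player arena of Player 1 where Player 1 can win from some
vertex but has no optimal strategy based on `M_triv`. -/
theorem buchi_objective_counterexample :
    StronglyMonotone (trivMem Bool) InfBoth ∧
    ProgressConsistent (trivMem Bool) InfBoth ∧
    ∃ A : Arena Bool, A.IsFinite ∧ A.OneP1 ∧
      (∃ v : A.V, ∃ σ : A.Strategy, σ.WinningFrom InfBoth v) ∧
      ¬ ∃ σ : A.Strategy, σ.BasedOn (trivMem Bool) ∧ σ.Optimal InfBoth := by
  refine ⟨fun w₁ w₂ _ => Or.inl (prefLe_InfBoth w₁ w₂),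
    fun m w₁ w₂ _ _ hlt => absurd (prefLe_InfBoth (w₁ ++ w₂) w₁) hlt.2,
    oneArena, ⟨inferInstanceAs (Finite Unit), Set.finite_univ (α := Unit × Bool × Unit)⟩, fun _ => trivial,
    ⟨(), altStrat, altStrat_winning⟩, ?_⟩
  rintro ⟨σ, ⟨nxt, hnxt⟩, hopt⟩
  set e₀ : oneArena.V × Bool × oneArena.V := nxt () () with he₀
  have hconst : ∀ l, σ.next () l = e₀ := fun l => hnxt () l (oneArena_hist () l) trivial
  -- the constant play following σ
  set π : ℕ → oneArena.V × Bool × oneArena.V := fun _ => e₀ with hπ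
  have hplay : oneArena.PlayFrom () π := ⟨rfl, fun n => ⟨Set.mem_univ _, rfl⟩⟩
  have hcons : σ.Consistent () π := fun n _ => (hconst _).symm
  have hwin : Arena.playCol π ∈ InfBoth := hopt () ⟨altStrat, altStrat_winning⟩ π hplay hcons
  obtain ⟨h1, h2⟩ := hwin
  obtain ⟨n, _, hn⟩ := h1 0
  obtain ⟨m, _, hm⟩ := h2 0
  have : e₀.2.1 = true := hn
  have : e₀.2.1 = false := hm
  simp_all

end RegularMemory
end
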